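/- Let C_1,...,C_h be a×(a+1) matrices and D_1,...,D_h be h×(a+1) matrices over a field, and let D_i^{(j)} denote the j-th row of D_i. Then the determinant of the (ah+h)×(ah+h) block matrix whose upper-left is the block-diagonal matrix diag(C_1,...,C_h) and whose bottom h rows are [D_1 D_2 ... D_h] equals (-1)^{ah(h-1)/2} times the determinant of the h×h matrix whose (j,i) entry is det of the (a+1)×(a+1) matrix obtained by stacking C_i on top of the row D_i^{(j)}. -/

import Mathlib

open Matrix

namespace DetDiagId

private lemma div_mul_add {m i c : ℕ} (hc : c < m) : (i * m + c) / m = i := by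
  rw [mul_comm i m, Nat.mul_add_div (by omega), Nat.div_eq_of_lt hc, add_zero]

private lemma mod_mul_add {m i c : ℕ} (hc : c < m) : (i * m + c) % m = c := by
  rw [mul_comm i m, Nat.mul_add_mod, Nat.mod_eq_of_lt hc]

private lemma interleave_lt {a q1 r1 q2 r2 : ℕ} (h1 : r1 < a) (h2 : r2 < a)
    (hlt : q1 * a + r1 < q2 * a + r2) : q1 * (a+1) + r1 < q2 * (a+1) + r2 := by
  have hq : q1 ≤ q2 := by nlinarith
  rcases Nat.eq_or_lt_of_le hq with h | h
  · subst h; omega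
  · nlinarith

section Enc

variable (a h : ℕ)

def colEnc : Fin h × Fin (a+1) ≃ Fin (h*(a+1)) where
  toFun p := ⟨(p.1 : ℕ) * (a+1) + p.2, by
    have h1 : (p.1 : ℕ) + 1 ≤ h := p.1.isLt
    have h2 := p.2.isLt
    nlinarith⟩
  invFun x := (⟨(x : ℕ) / (a+1), by
      have := x.isLt
      exact (Nat.div_lt_iff_lt_mul (Nat.succ_pos a)).mpr this⟩,
    ⟨(x : ℕ) % (a+1), Nat.mod_lt _ (Nat.succ_pos a)⟩)
  left_inv := by
    rintro ⟨i, c⟩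
    have hc : (c : ℕ) < a+1 := c.isLt
    simp [Prod.ext_iff, Fin.ext_iff, div_mul_add hc, mod_mul_add hc]
  right_inv := by
    intro x
    apply Fin.ext
    exact Nat.div_add_mod' _ _

lemma colEnc_val (p : Fin h × Fin (a+1)) : (colEnc a h p : ℕ) = (p.1 : ℕ) * (a+1) + p.2 := rfl

def rowEnc : (Fin h × Fin a) ⊕ Fin h ≃ Fin (h*(a+1)) where
  toFun x := match x with
    | .inl p => ⟨(p.1 : ℕ) * a + p.2, by
        have h1 : (p.1 : ℕ) + 1 ≤ h := p.1.isLt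
        have h2 := p.2.isLt
        nlinarith⟩
    | .inr j => ⟨h * a + j, by
        have := j.isLt; nlinarith⟩
  invFun x := if hx : (x : ℕ) < h * a then
      .inl (⟨(x : ℕ) / a, by
          have ha0 : 0 < a := by
            rcases Nat.eq_zero_or_pos a with rfl | h'
            · simp at hx
            · exact h'
          exact (Nat.div_lt_iff_lt_mul ha0).mpr hx⟩,
        ⟨(x : ℕ) % a, Nat.mod_lt _ (by
          rcases Nat.eq_zero_or_pos a with rfl | h'
          · simp at hx
          · exact h')⟩)
    else .inr ⟨(x : ℕ) - h*a, by
        have h1 := x.isLt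
        have h2 : h*(a+1) = h*a+h := by ring
        omega⟩
  left_inv := by
    rintro (⟨i, r⟩ | j)
    · have hr := r.isLt
      have hlt : (i : ℕ) * a + (r : ℕ) < h * a := by
        have h1 : (i : ℕ) + 1 ≤ h := i.isLt
        nlinarith
      simp [hlt, Prod.ext_iff, Fin.ext_iff, div_mul_add hr, mod_mul_add hr]
    · have hnot : ¬ (h*a + (j : ℕ) < h*a) := by omega
      simp [hnot]
  right_inv := by
    intro x
    by_cases hx : (x : ℕ) < h*a
    · simp only [dif_pos hx]
      apply Fin.ext
      exact Nat.div_add_mod' _ _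
    · simp only [dif_neg hx]
      apply Fin.ext
      simp only []
      omega

lemma rowEnc_inl_val (i : Fin h) (r : Fin a) :
    (rowEnc a h (.inl (i, r)) : ℕ) = (i : ℕ) * a + r := rfl

lemma rowEnc_inr_val (j : Fin h) : (rowEnc a h (.inr j) : ℕ) = h * a + j := rfl

def psi : (Fin h × Fin a) ⊕ Fin h ≃ Fin h × Fin (a+1) where
  toFun x := match x with
    | .inl p => (p.1, p.2.castSucc)
    | .inr j => (j, Fin.last a)
  invFun p := if hc : (p.2 : ℕ) < a then .inl (p.1, ⟨p.2, hc⟩) else .inr p.1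
  left_inv := by
    rintro (⟨i, r⟩ | j)
    · simp [r.isLt]
    · simp
  right_inv := by
    rintro ⟨i, c⟩
    by_cases hc : (c : ℕ) < a
    · simp [hc, Prod.ext_iff, Fin.ext_iff]
    · have hc' : c = Fin.last a := by
        apply Fin.ext
        have := c.isLt
        simp only [Fin.val_last]
        omega
      simp [hc, hc']

def tau : Equiv.Perm (Fin (h*(a+1))) := ((rowEnc a h).symm.trans (psi a h)).trans (colEnc a h)

lemma tau_val (x : Fin (h*(a+1))) :
    (tau a h x : ℕ) = if (x : ℕ) < h*a then ((x : ℕ)/a)*(a+1) + (x : ℕ)%a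
      else ((x : ℕ) - h*a)*(a+1) + a := by
  simp only [tau, Equiv.trans_apply]
  by_cases hx : (x : ℕ) < h*a
  · rw [if_pos hx]
    simp only [rowEnc, Equiv.coe_fn_symm_mk, dif_pos hx]
    simp [psi, colEnc]
  · rw [if_neg hx]
    simp only [rowEnc, Equiv.coe_fn_symm_mk, dif_neg hx]
    simp [psi, colEnc]

lemma tau_val_mk (v : ℕ) (hv : v < h*(a+1)) :
    (tau a h ⟨v, hv⟩ : ℕ) = if v < h*a then (v/a)*(a+1) + v%a
      else (v - h*a)*(a+1) + a :=
  tau_val a h ⟨v, hv⟩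

end Enc

section Sign

private lemma sign_eq_signAux {n : ℕ} (σ : Equiv.Perm (Fin n)) :
    Equiv.Perm.sign σ = Equiv.Perm.signAux σ := by
  refine Equiv.Perm.swap_induction_on σ ?_ ?_
  · simp [Equiv.Perm.signAux_one]
  · intro f x y hxy hf
    rw [Equiv.Perm.signAux_mul, Equiv.Perm.sign_mul, hf,
      Equiv.Perm.signAux_swap hxy, Equiv.Perm.sign_swap hxy]

private lemma signAux_eq_pow {n : ℕ} (σ : Equiv.Perm (Fin n)) :
    Equiv.Perm.signAux σ =
      (-1 : ℤˣ) ^ ((Equiv.Perm.finPairsLT n).filter (fun x => σ x.1 ≤ σ x.2)).card := by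
  unfold Equiv.Perm.signAux
  rw [Finset.prod_ite, Finset.prod_const, Finset.prod_const, one_pow, mul_one]

private lemma card_pairs (h : ℕ) :
    ((Finset.univ : Finset (Fin h × Fin h)).filter (fun p => p.2 < p.1)).card = h*(h-1)/2 := by
  rw [← Fintype.card_subtype]
  have e : {p : Fin h × Fin h // p.2 < p.1} ≃ Σ i : Fin h, Fin i :=
    { toFun := fun x => ⟨x.1.1, ⟨x.1.2, x.2⟩⟩
      invFun := fun s => ⟨(s.1, ⟨(s.2 : ℕ), lt_trans s.2.isLt s.1.isLt⟩), s.2.isLt⟩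
      left_inv := fun x => rfl
      right_inv := fun s => rfl }
  rw [Fintype.card_congr e, Fintype.card_sigma]
  simp only [Fintype.card_fin]
  rw [Fin.sum_univ_eq_sum_range (fun i => i) h, Finset.sum_range_id]

variable (a h : ℕ)

private lemma inv_char {x : Σ _ : Fin (h*(a+1)), Fin (h*(a+1))}
    (hx : x ∈ (Equiv.Perm.finPairsLT (h*(a+1))).filter
        (fun x => tau a h x.1 ≤ tau a h x.2)) :
    (x.2 : ℕ) < h*a ∧ h*a ≤ (x.1 : ℕ) ∧ ((x.1 : ℕ) - h*a) < (x.2 : ℕ)/a ∧ 0 < a := by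
  obtain ⟨hmem, hle⟩ := Finset.mem_filter.mp hx
  have hlt : (x.2 : ℕ) < (x.1 : ℕ) := Fin.lt_def.mp (Equiv.Perm.mem_finPairsLT.mp hmem)
  have hle' : (tau a h x.1 : ℕ) ≤ (tau a h x.2 : ℕ) := Fin.le_def.mp hle
  rw [tau_val, tau_val] at hle'
  by_cases h1 : (x.1 : ℕ) < h*a
  · exfalso
    have h2 : (x.2 : ℕ) < h*a := lt_trans hlt h1
    rw [if_pos h1, if_pos h2] at hle'
    have ha0 : 0 < a := by
      rcases Nat.eq_zero_or_pos a with rfl | h'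
      · simp at h2
      · exact h'
    have e1 : (x.1 : ℕ)/a*a + (x.1 : ℕ)%a = (x.1 : ℕ) := Nat.div_add_mod' _ _
    have e2 : (x.2 : ℕ)/a*a + (x.2 : ℕ)%a = (x.2 : ℕ) := Nat.div_add_mod' _ _
    have := interleave_lt (Nat.mod_lt (x.2 : ℕ) ha0) (Nat.mod_lt (x.1 : ℕ) ha0)
      (by omega : ((x.2 : ℕ)/a)*a + (x.2 : ℕ)%a < ((x.1 : ℕ)/a)*a + (x.1 : ℕ)%a)
    linarith
  · push_neg at h1
    by_cases h2 : (x.2 : ℕ) < h*a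
    · have ha0 : 0 < a := by
        rcases Nat.eq_zero_or_pos a with rfl | h'
        · simp at h2
        · exact h'
      refine ⟨h2, h1, ?_, ha0⟩
      rw [if_neg (by omega), if_pos h2] at hle'
      by_contra hcon
      push_neg at hcon
      have hr : (x.2 : ℕ)%a < a := Nat.mod_lt _ ha0
      nlinarith
    · exfalso
      push_neg at h2
      rw [if_neg (by omega), if_neg (by omega)] at hle'
      have hsub : (x.2 : ℕ) - h*a < (x.1 : ℕ) - h*a := by omega
      nlinarith

private lemma card_inversions :
    ((Equiv.Perm.finPairsLT (h*(a+1))).filter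
      (fun x => tau a h x.1 ≤ tau a h x.2)).card = (h*(h-1)/2) * a := by
  have hn : h*(a+1) = h*a + h := by ring
  have hT : (((Finset.univ : Finset (Fin h × Fin h)).filter (fun p => p.2 < p.1)) ×ˢ
      (Finset.univ : Finset (Fin a))).card = (h*(h-1)/2) * a := by
    rw [Finset.card_product, card_pairs h, Finset.card_univ, Fintype.card_fin]
  rw [← hT]
  refine Finset.card_bij'
    (fun x hx => ((⟨(x.2 : ℕ)/a, by
        have hc := inv_char a h hx
        exact (Nat.div_lt_iff_lt_mul hc.2.2.2).mpr hc.1⟩,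
      ⟨(x.1 : ℕ) - h*a, by
        have hc := inv_char a h hx
        have h1 := x.1.isLt
        have h2 : h*(a+1) = h*a + h := by ring
        omega⟩),
      ⟨(x.2 : ℕ)%a, by
        have hc := inv_char a h hx
        exact Nat.mod_lt _ hc.2.2.2⟩))
    (fun t ht => ⟨⟨h*a + (t.1.2 : ℕ), by
        have h1 : (t.1.2 : ℕ) < h := t.1.2.isLt
        have h2 : h*(a+1) = h*a + h := by ring
        omega⟩,
      ⟨(t.1.1 : ℕ)*a + (t.2 : ℕ), by
        have h1 : (t.1.1 : ℕ) + 1 ≤ h := t.1.1.isLt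
        have h2 := t.2.isLt
        nlinarith⟩⟩)
    ?_ ?_ ?_ ?_
  · -- dec maps into T
    intro x hx
    have hc := inv_char a h hx
    simp only [Finset.mem_product, Finset.mem_filter, Finset.mem_univ, true_and, and_true]
    exact hc.2.2.1
  · -- enc maps into Inv
    intro t ht
    simp only [Finset.mem_product, Finset.mem_filter, Finset.mem_univ, true_and, and_true] at ht
    rcases t with ⟨⟨i, j⟩, r⟩
    have hji : (j : ℕ) < (i : ℕ) := ht
    have ha0 : 0 < a := r.pos
    have hia : (i : ℕ)*a + (r : ℕ) < h*a := by
      have h1 : (i : ℕ) + 1 ≤ h := i.isLt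
      have h2 := r.isLt
      nlinarith
    dsimp only
    rw [Finset.mem_filter]
    constructor
    · rw [Equiv.Perm.mem_finPairsLT]
      show ((i : ℕ)*a + (r : ℕ)) < h*a + (j : ℕ)
      omega
    · rw [Fin.le_def]
      rw [tau_val_mk, tau_val_mk]
      rw [if_neg (show ¬ (h*a + (j : ℕ) < h*a) from by omega), if_pos hia]
      rw [show h*a + (j : ℕ) - h*a = (j : ℕ) from by omega]
      rw [div_mul_add r.isLt, mod_mul_add r.isLt]
      have h2 := r.isLt
      nlinarith
  · -- enc (dec x) = x
    intro x hx
    have hc := inv_char a h hx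
    rcases x with ⟨x1, x2⟩
    dsimp only at hc ⊢
    refine Sigma.ext ?_ ?_
    · apply Fin.ext
      show h*a + ((x1 : ℕ) - h*a) = (x1 : ℕ)
      omega
    · rw [heq_eq_eq]
      apply Fin.ext
      show ((x2 : ℕ)/a)*a + (x2 : ℕ)%a = (x2 : ℕ)
      exact Nat.div_add_mod' _ _
  · -- dec (enc t) = t
    intro t ht
    rcases t with ⟨⟨i, j⟩, r⟩
    dsimp only
    simp only [Prod.mk.injEq]
    refine ⟨⟨?_, ?_⟩, ?_⟩
    · apply Fin.ext
      show ((i : ℕ)*a + (r : ℕ))/a = (i : ℕ)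
      exact div_mul_add r.isLt
    · apply Fin.ext
      show h*a + (j : ℕ) - h*a = (j : ℕ)
      omega
    · apply Fin.ext
      show ((i : ℕ)*a + (r : ℕ))%a = (r : ℕ)
      exact mod_mul_add r.isLt

lemma sign_tau : Equiv.Perm.sign (tau a h) = (-1 : ℤˣ) ^ (a*h*(h-1)/2) := by
  rw [sign_eq_signAux, signAux_eq_pow, card_inversions]
  congr 1
  have h2 : 2 ∣ h * (h - 1) := by
    rcases Nat.even_or_odd h with he | ho
    · exact Dvd.dvd.mul_right he.two_dvd _
    · have : Even (h - 1) := by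
        rcases ho with ⟨k, hk⟩
        exact ⟨k, by omega⟩
      exact Dvd.dvd.mul_left this.two_dvd _
  rw [mul_comm (h*(h-1)/2) a, ← Nat.mul_div_assoc a h2, ← mul_assoc]

end Sign


section Mat

variable {F : Type*} [Field F] {a h : ℕ}

def Smat (Ci : Matrix (Fin a) (Fin (a+1)) F) (v : Fin (a+1) → F) :
    Matrix (Fin (a+1)) (Fin (a+1)) F :=
  Matrix.of fun r c => if hr : (r : ℕ) < a then Ci ⟨r, hr⟩ c else v c

lemma Smat_updateRow (Ci : Matrix (Fin a) (Fin (a+1)) F) (v w : Fin (a+1) → F) :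
    (Smat Ci v).updateRow (Fin.last a) w = Smat Ci w := by
  ext r c
  by_cases hr : r = Fin.last a
  · subst hr
    rw [Matrix.updateRow_self]
    simp [Smat]
  · rw [Matrix.updateRow_ne hr]
    have hra : (r : ℕ) < a := by
      have h1 := r.isLt
      have h2 : (r : ℕ) ≠ a := fun e => hr (Fin.ext (by simp [Fin.val_last, e]))
      omega
    simp [Smat, hra]

lemma det_Smat_add (Ci : Matrix (Fin a) (Fin (a+1)) F) (v w : Fin (a+1) → F) :
    (Smat Ci (v + w)).det = (Smat Ci v).det + (Smat Ci w).det := by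
  rw [← Smat_updateRow Ci v (v + w), Matrix.det_updateRow_add,
    Smat_updateRow, Smat_updateRow]

lemma det_Smat_smul (Ci : Matrix (Fin a) (Fin (a+1)) F) (t : F) (v : Fin (a+1) → F) :
    (Smat Ci (t • v)).det = t * (Smat Ci v).det := by
  rw [← Smat_updateRow Ci v (t • v), Matrix.det_updateRow_smul, Smat_updateRow]

lemma det_Smat_zero (Ci : Matrix (Fin a) (Fin (a+1)) F) :
    (Smat Ci (0 : Fin (a+1) → F)).det = 0 := by
  apply Matrix.det_eq_zero_of_row_eq_zero (Fin.last a)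
  intro c
  simp [Smat]

variable (C : Fin h → Matrix (Fin a) (Fin (a+1)) F)

def Bmat (d : Fin h → Fin h × Fin (a+1) → F) :
    Matrix (Fin h × Fin (a+1)) (Fin h × Fin (a+1)) F :=
  Matrix.of fun p q =>
    if hp : (p.2 : ℕ) < a then (if p.1 = q.1 then C p.1 ⟨p.2, hp⟩ q.2 else 0) else d p.1 q

def Mmat (d : Fin h → Fin h × Fin (a+1) → F) : Matrix (Fin h) (Fin h) F :=
  Matrix.of fun j i => (Smat (C i) (fun c => d j (i, c))).det

lemma Bmat_updateRow [inst : DecidableEq (Fin h)] (d : Fin h → Fin h × Fin (a+1) → F)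
    (j : Fin h) (x : Fin h × Fin (a+1) → F) :
    (Bmat C d).updateRow (j, Fin.last a) x = Bmat C (Function.update d j x) := by
  ext p q
  by_cases hp : p = (j, Fin.last a)
  · subst hp
    rw [Matrix.updateRow_self]
    simp [Bmat, Function.update_self]
  · rw [Matrix.updateRow_ne hp]
    rcases p with ⟨p1, p2⟩
    by_cases h2 : (p2 : ℕ) < a
    · simp [Bmat, h2]
    · have hp2 : p2 = Fin.last a := by
        apply Fin.ext
        have := p2.isLt
        simp only [Fin.val_last]
        omega
      have hp1 : p1 ≠ j := fun e => hp (by rw [e, hp2])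
      simp [Bmat, h2, Function.update_of_ne hp1]

lemma Mmat_updateRow [inst : DecidableEq (Fin h)] (d : Fin h → Fin h × Fin (a+1) → F)
    (j : Fin h) (x : Fin h × Fin (a+1) → F) :
    (Mmat C d).updateRow j (fun i => (Smat (C i) (fun c => x (i, c))).det)
      = Mmat C (Function.update d j x) := by
  ext j' i
  by_cases hj : j' = j
  · subst hj
    rw [Matrix.updateRow_self]
    simp [Mmat, Function.update_self]
  · rw [Matrix.updateRow_ne hj]
    simp [Mmat, Function.update_of_ne hj]

def BML : MultilinearMap F (fun _ : Fin h => (Fin h × Fin (a+1) → F)) F where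
  toFun d := (Bmat C d).det
  map_update_add' := by
    intro inst d j x y
    have hinst : inst = instDecidableEqFin h := Subsingleton.elim _ _
    subst hinst
    rw [← Bmat_updateRow, ← Bmat_updateRow, ← Bmat_updateRow, Matrix.det_updateRow_add]
  map_update_smul' := by
    intro inst d j t x
    have hinst : inst = instDecidableEqFin h := Subsingleton.elim _ _
    subst hinst
    rw [← Bmat_updateRow, ← Bmat_updateRow, Matrix.det_updateRow_smul, smul_eq_mul]

def MML : MultilinearMap F (fun _ : Fin h => (Fin h × Fin (a+1) → F)) F where
  toFun d := (Mmat C d).det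
  map_update_add' := by
    intro inst d j x y
    have hinst : inst = instDecidableEqFin h := Subsingleton.elim _ _
    subst hinst
    rw [← Mmat_updateRow, ← Mmat_updateRow, ← Mmat_updateRow]
    have hrow : (fun i => (Smat (C i) (fun c => (x + y) (i, c))).det)
        = (fun i => (Smat (C i) (fun c => x (i, c))).det)
          + (fun i => (Smat (C i) (fun c => y (i, c))).det) := by
      funext i
      have he : (fun c => (x + y) (i, c)) = (fun c => x (i, c)) + (fun c => y (i, c)) := rfl
      rw [he, det_Smat_add]
      rfl
    rw [hrow, Matrix.det_updateRow_add]
  map_update_smul' := by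
    intro inst d j t x
    have hinst : inst = instDecidableEqFin h := Subsingleton.elim _ _
    subst hinst
    rw [← Mmat_updateRow, ← Mmat_updateRow]
    have hrow : (fun i => (Smat (C i) (fun c => (t • x) (i, c))).det)
        = t • (fun i => (Smat (C i) (fun c => x (i, c))).det) := by
      funext i
      have he : (fun c => (t • x) (i, c)) = t • (fun c => x (i, c)) := rfl
      rw [he, det_Smat_smul]
      rfl
    rw [hrow, Matrix.det_updateRow_smul, smul_eq_mul]

lemma core (v : Fin h → Fin h × Fin (a+1)) :
    (Bmat C (fun j => Pi.single (v j) (1 : F))).det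
      = (Mmat C (fun j => Pi.single (v j) (1 : F))).det := by
  by_cases hinj : Function.Injective (fun j => (v j).1)
  · -- injective: both sides are sign π times the same product
    have hbij := Finite.injective_iff_bijective.mp hinj
    let π : Equiv.Perm (Fin h) := Equiv.ofBijective _ hbij
    have hπ : ∀ j, π j = (v j).1 := fun j => rfl
    let w : Fin h → Fin (a+1) := fun i => (v (π.symm i)).2
    let dg : Fin h → F := fun i => (Smat (C i) (Pi.single (w i) (1 : F))).det
    have hw : ∀ j, w (π j) = (v j).2 := by
      intro j
      show (v (π.symm (π j))).2 = (v j).2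
      rw [Equiv.symm_apply_apply]
    -- M side
    have hMs : Mmat C (fun j => Pi.single (v j) (1 : F))
        = (Matrix.diagonal dg).submatrix π id := by
      ext j i
      rw [Matrix.submatrix_apply, id_eq]
      show (Smat (C i) (fun c => (Pi.single (v j) (1 : F) : Fin h × Fin (a+1) → F) (i, c))).det
        = Matrix.diagonal dg (π j) i
      rw [Matrix.diagonal_apply]
      by_cases hij : π j = i
      · rw [if_pos hij]
        have hfun : (fun c => (Pi.single (v j) (1 : F) : Fin h × Fin (a+1) → F) (i, c))
            = Pi.single ((v j).2) 1 := by
          funext c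
          rw [Pi.single_apply, Pi.single_apply]
          have : ((i, c) = v j) ↔ (c = (v j).2) := by
            constructor
            · intro e; rw [← e]
            · intro e
              have : i = (v j).1 := by rw [← hij, hπ]
              rw [Prod.ext_iff]
              exact ⟨this, e⟩
          simp only [this]
        rw [hfun]
        show _ = (Smat (C (π j)) (Pi.single (w (π j)) (1 : F))).det
        rw [hw j, hij]
      · rw [if_neg hij]
        have hfun : (fun c => (Pi.single (v j) (1 : F) : Fin h × Fin (a+1) → F) (i, c)) = 0 := by
          funext c
          rw [Pi.single_apply, if_neg]
          · rfl
          · intro e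
            apply hij
            rw [hπ, ← e]
        rw [hfun]
        exact det_Smat_zero (C i)
    -- B side
    let σκ : Equiv.Perm (Fin h × Fin (a+1)) :=
      (psi a h).permCongr (Equiv.sumCongr (Equiv.refl (Fin h × Fin a)) π)
    have hσ_top : ∀ (i : Fin h) (c : Fin (a+1)), (c : ℕ) < a → σκ (i, c) = (i, c) := by
      intro i c hc
      show (psi a h) (Equiv.sumCongr (Equiv.refl _) π ((psi a h).symm (i, c))) = (i, c)
      have h1 : (psi a h).symm (i, c) = Sum.inl (i, ⟨c, hc⟩) := by
        simp only [psi, Equiv.coe_fn_symm_mk, dif_pos hc]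
      rw [h1]
      simp [psi, Prod.ext_iff, Fin.ext_iff]
    have hσ_bot : ∀ (j : Fin h), σκ (j, Fin.last a) = (π j, Fin.last a) := by
      intro j
      show (psi a h) (Equiv.sumCongr (Equiv.refl _) π ((psi a h).symm (j, Fin.last a))) = _
      have h1 : (psi a h).symm (j, Fin.last a) = Sum.inr j := by
        simp only [psi, Equiv.coe_fn_symm_mk]
        rw [dif_neg]
        simp [Fin.val_last]
      rw [h1]
      simp [psi]
    let G : Matrix (Fin h × Fin (a+1)) (Fin h × Fin (a+1)) F :=
      Matrix.of fun p q =>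
        if p.1 = q.1 then Smat (C p.1) (Pi.single (w p.1) (1 : F)) p.2 q.2 else 0
    have hBs : Bmat C (fun j => Pi.single (v j) (1 : F)) = G.submatrix σκ id := by
      ext p q
      rcases p with ⟨p1, p2⟩
      rcases q with ⟨q1, q2⟩
      rw [Matrix.submatrix_apply, id_eq]
      by_cases hp2 : (p2 : ℕ) < a
      · rw [hσ_top p1 p2 hp2]
        show (if hp : (p2 : ℕ) < a then (if p1 = q1 then C p1 ⟨p2, hp⟩ q2 else 0) else _) = _
        rw [dif_pos hp2]
        show _ = (if p1 = q1 then Smat (C p1) (Pi.single (w p1) (1 : F)) p2 q2 else 0)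
        by_cases h12 : p1 = q1
        · rw [if_pos h12, if_pos h12]
          show C p1 ⟨p2, hp2⟩ q2 = Smat (C p1) _ p2 q2
          simp [Smat, hp2]
        · rw [if_neg h12, if_neg h12]
      · have hp2' : p2 = Fin.last a := by
          apply Fin.ext
          have := p2.isLt
          simp only [Fin.val_last]
          omega
        subst hp2'
        rw [hσ_bot p1]
        show (if hp : ((Fin.last a : Fin (a+1)) : ℕ) < a
            then (if p1 = q1 then C p1 ⟨(Fin.last a : Fin (a+1)), hp⟩ q2 else 0)
            else (Pi.single (v p1) (1 : F) : Fin h × Fin (a+1) → F) (q1, q2)) = _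
        rw [dif_neg (by simp [Fin.val_last])]
        show (Pi.single (v p1) (1 : F) : Fin h × Fin (a+1) → F) (q1, q2)
          = (if π p1 = q1 then Smat (C (π p1)) (Pi.single (w (π p1)) (1 : F)) (Fin.last a) q2 else 0)
        have hS : Smat (C (π p1)) (Pi.single (w (π p1)) (1 : F)) (Fin.last a) q2
            = (Pi.single ((v p1).2) (1 : F) : Fin (a+1) → F) q2 := by
          rw [hw p1]
          simp [Smat]
        rw [hS, Pi.single_apply, Pi.single_apply]
        by_cases h1 : π p1 = q1
        · rw [if_pos h1]
          have : ((q1, q2) = v p1) ↔ (q2 = (v p1).2) := by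
            constructor
            · intro e; rw [← e]
            · intro e
              rw [Prod.ext_iff]
              exact ⟨by rw [← h1, hπ], e⟩
          simp only [this]
        · rw [if_neg h1, if_neg]
          intro e
          apply h1
          rw [hπ, ← e]
    have hGdet : G.det = ∏ i, dg i := by
      have hGb : G = (Matrix.blockDiagonal
          (fun i => Smat (C i) (Pi.single (w i) (1 : F)))).submatrix
          (Equiv.prodComm (Fin h) (Fin (a+1))) (Equiv.prodComm (Fin h) (Fin (a+1))) := by
        ext p q
        rcases p with ⟨p1, p2⟩
        rcases q with ⟨q1, q2⟩
        rw [Matrix.submatrix_apply]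
        simp [Matrix.blockDiagonal_apply, G]
      rw [hGb, Matrix.det_submatrix_equiv_self, Matrix.det_blockDiagonal]
    have hsgn : Equiv.Perm.sign σκ = Equiv.Perm.sign π := by
      show Equiv.Perm.sign ((psi a h).permCongr (Equiv.sumCongr (Equiv.refl _) π)) = _
      rw [Equiv.Perm.sign_permCongr, Equiv.Perm.sign_sumCongr]
      simp
    rw [hBs, hMs, Matrix.det_permute, Matrix.det_permute, hGdet, Matrix.det_diagonal, hsgn]
  · -- non-injective: both sides vanish
    have hsurj : ¬ Function.Surjective (fun j => (v j).1) := fun hs =>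
      hinj (Finite.injective_iff_surjective.mpr hs)
    simp only [Function.Surjective, not_forall, not_exists] at hsurj
    obtain ⟨i0, hi0⟩ := hsurj
    have hM : (Mmat C (fun j => Pi.single (v j) (1 : F))).det = 0 := by
      apply Matrix.det_eq_zero_of_column_eq_zero i0
      intro j
      show (Smat (C i0) (fun c => (Pi.single (v j) (1 : F) : Fin h × Fin (a+1) → F) (i0, c))).det = 0
      have hfun : (fun c => (Pi.single (v j) (1 : F) : Fin h × Fin (a+1) → F) (i0, c)) = 0 := by
        funext c
        rw [Pi.single_apply, if_neg]
        · rfl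
        · intro e
          exact hi0 j (by rw [← e])
      rw [hfun]
      exact det_Smat_zero (C i0)
    have hB : (Bmat C (fun j => Pi.single (v j) (1 : F))).det = 0 := by
      rw [← Matrix.exists_mulVec_eq_zero_iff]
      have hni : ¬ LinearIndependent F (fun c : Fin (a+1) => (fun r : Fin a => C i0 r c)) := by
        intro hli
        have hcard := hli.fintype_card_le_finrank
        rw [Module.finrank_pi, Fintype.card_fin, Fintype.card_fin] at hcard
        omega
      obtain ⟨g, hg, c0, hc0⟩ := Fintype.not_linearIndependent_iff.mp hni
      refine ⟨(fun q => if q.1 = i0 then g q.2 else 0), ?_, ?_⟩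
      · intro h0
        apply hc0
        have := congrFun h0 (i0, c0)
        simpa using this
      · funext p
        show (∑ q, Bmat C (fun j => Pi.single (v j) (1 : F)) p q
          * (if q.1 = i0 then g q.2 else 0)) = 0
        rw [Fintype.sum_prod_type]
        rw [Finset.sum_eq_single i0]
        · rcases p with ⟨p1, p2⟩
          by_cases hp2 : (p2 : ℕ) < a
          · by_cases hp1 : p1 = i0
            · have hterm : ∀ q2 : Fin (a+1),
                  Bmat C (fun j => Pi.single (v j) (1 : F)) (p1, p2) (i0, q2)
                    * (if (i0 : Fin h) = i0 then g q2 else 0) = C i0 ⟨p2, hp2⟩ q2 * g q2 := by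
                intro q2
                rw [if_pos rfl]
                show (if hp : (p2 : ℕ) < a then (if p1 = i0 then C p1 ⟨p2, hp⟩ q2 else 0)
                  else (Pi.single (v p1) (1 : F) : Fin h × Fin (a+1) → F) (i0, q2)) * g q2 = _
                rw [dif_pos hp2, if_pos hp1, hp1]
              rw [Finset.sum_congr rfl (fun q2 _ => hterm q2)]
              have := congrFun hg ⟨p2, hp2⟩
              simp only [Finset.sum_apply, Pi.smul_apply, smul_eq_mul, Pi.zero_apply] at this
              rw [← this]
              apply Finset.sum_congr rfl
              intro q2 _
              ring
            · apply Finset.sum_eq_zero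
              intro q2 _
              rw [if_pos rfl]
              show (if hp : (p2 : ℕ) < a then (if p1 = i0 then C p1 ⟨p2, hp⟩ q2 else 0) else _) * g q2 = 0
              rw [dif_pos hp2, if_neg hp1, zero_mul]
          · apply Finset.sum_eq_zero
            intro q2 _
            rw [if_pos rfl]
            show (if hp : (p2 : ℕ) < a then (if p1 = i0 then C p1 ⟨p2, hp⟩ q2 else 0)
              else (Pi.single (v p1) (1 : F) : Fin h × Fin (a+1) → F) (i0, q2)) * g q2 = 0
            rw [dif_neg hp2, Pi.single_apply, if_neg, zero_mul]
            intro e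
            exact hi0 p1 (by rw [← e])
        · intro q1 _ hq1
          apply Finset.sum_eq_zero
          intro q2 _
          rw [if_neg hq1, mul_zero]
        · intro hmem
          exact absurd (Finset.mem_univ i0) hmem
    rw [hB, hM]

lemma BM_eq : BML C = MML C := by
  apply Module.Basis.ext_multilinear (fun _ => Pi.basisFun F (Fin h × Fin (a+1)))
  intro v
  have hfun : (fun j => (Pi.basisFun F (Fin h × Fin (a+1))) (v j))
      = fun j => Pi.single (v j) (1 : F) := by
    funext j
    simp [Pi.basisFun_apply]
  rw [hfun]
  exact core C v

lemma det_Bmat_eq_det_Mmat (d : Fin h → Fin h × Fin (a+1) → F) :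
    (Bmat C d).det = (Mmat C d).det :=
  DFunLike.congr_fun (BM_eq C) d

end Mat

end DetDiagId

open Matrix

/-- **Block determinant identity (Lemma diag-id).** For `a × (a+1)` matrices `C 1, ..., C h`
and `h × (a+1)` matrices `D 1, ..., D h`, the determinant of the `(ah+h) × (ah+h)` matrix
with block-diagonal blocks `C i` on top and the bottom `h` rows given by `[D 1 D 2 ⋯ D h]`
equals `(-1)^(ah(h-1)/2)` times the determinant of the `h × h` matrix whose `(j, i)` entry is
the determinant of the `(a+1) × (a+1)` matrix obtained by stacking `C i` on top of the
`j`-th row of `D i`. -/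
theorem det_blockDiagonal_with_bottom_rows
    (F : Type*) [Field F] (a h : ℕ)
    (C : Fin h → Matrix (Fin a) (Fin (a+1)) F)
    (D : Fin h → Matrix (Fin h) (Fin (a+1)) F)
    (B : Matrix (Fin (h*(a+1))) (Fin (h*(a+1))) F)
    -- the first `h*a` rows: block-diagonal arrangement of the `C i`
    (hBtop : ∀ (i : Fin h) (r : Fin a) (i' : Fin h) (c : Fin (a+1)),
      B ⟨(i : ℕ) * a + r, by
            have h1 : (i : ℕ) + 1 ≤ h := i.isLt
            have h2 : (i : ℕ) * a + (r : ℕ) < ((i : ℕ) + 1) * a := by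
              have := r.isLt; nlinarith
            have h3 : ((i : ℕ) + 1) * a ≤ h * (a+1) := by nlinarith
            omega⟩
        ⟨(i' : ℕ) * (a+1) + c, by
            have h1 : (i' : ℕ) + 1 ≤ h := i'.isLt
            have h2 : (i' : ℕ) * (a+1) + (c : ℕ) < ((i' : ℕ) + 1) * (a+1) := by
              have := c.isLt; nlinarith
            have h3 : ((i' : ℕ) + 1) * (a+1) ≤ h * (a+1) := by nlinarith
            omega⟩ = if i = i' then C i r c else 0)
    -- the last `h` rows: the juxtaposition `[D 1 D 2 ⋯ D h]`
    (hBbot : ∀ (j : Fin h) (i' : Fin h) (c : Fin (a+1)),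
      B ⟨h * a + j, by
            have h1 : (j : ℕ) < h := j.isLt
            have h2 : h * (a+1) = h * a + h := by ring
            omega⟩
        ⟨(i' : ℕ) * (a+1) + c, by
            have h1 : (i' : ℕ) + 1 ≤ h := i'.isLt
            have h2 : (i' : ℕ) * (a+1) + (c : ℕ) < ((i' : ℕ) + 1) * (a+1) := by
              have := c.isLt; nlinarith
            have h3 : ((i' : ℕ) + 1) * (a+1) ≤ h * (a+1) := by nlinarith
            omega⟩ = D i' j c) :
    B.det = (-1 : F) ^ (a * h * (h - 1) / 2) *
      (Matrix.of fun (j i : Fin h) =>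
        (Matrix.of fun (r c : Fin (a+1)) =>
          if hr : (r : ℕ) < a then C i ⟨r, hr⟩ c else D i j c).det).det := by
  set d0 : Fin h → Fin h × Fin (a+1) → F := fun j q => D q.1 j q.2 with hd0
  have hBsub : B = (DetDiagId.Bmat C d0).submatrix
      ((DetDiagId.rowEnc a h).symm.trans (DetDiagId.psi a h))
      (DetDiagId.colEnc a h).symm := by
    ext p q
    obtain ⟨pr, hpr⟩ : ∃ pr, DetDiagId.rowEnc a h pr = p :=
      ⟨(DetDiagId.rowEnc a h).symm p, Equiv.apply_symm_apply _ _⟩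
    obtain ⟨qc, hqc⟩ : ∃ qc, DetDiagId.colEnc a h qc = q :=
      ⟨(DetDiagId.colEnc a h).symm q, Equiv.apply_symm_apply _ _⟩
    subst hpr
    subst hqc
    rw [Matrix.submatrix_apply, Equiv.trans_apply, Equiv.symm_apply_apply,
      Equiv.symm_apply_apply]
    rcases pr with ⟨i, r⟩ | j
    · rcases qc with ⟨i', c⟩
      have hP : DetDiagId.rowEnc a h (Sum.inl (i, r))
          = (⟨(i : ℕ) * a + r, by
              have h1 : (i : ℕ) + 1 ≤ h := i.isLt
              have h2 := r.isLt
              nlinarith⟩ : Fin (h*(a+1))) := Fin.ext rfl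
      have hQ : DetDiagId.colEnc a h (i', c)
          = (⟨(i' : ℕ) * (a+1) + c, by
              have h1 : (i' : ℕ) + 1 ≤ h := i'.isLt
              have h2 := c.isLt
              nlinarith⟩ : Fin (h*(a+1))) := Fin.ext rfl
      have hb : B (⟨(i : ℕ) * a + r, by
              have h1 : (i : ℕ) + 1 ≤ h := i.isLt
              have h2 := r.isLt
              nlinarith⟩ : Fin (h*(a+1)))
          (⟨(i' : ℕ) * (a+1) + c, by
              have h1 : (i' : ℕ) + 1 ≤ h := i'.isLt
              have h2 := c.isLt
              nlinarith⟩ : Fin (h*(a+1))) = if i = i' then C i r c else 0 :=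
        hBtop i r i' c
      rw [hP, hQ, hb]
      have hrval : ((r.castSucc : Fin (a+1)) : ℕ) < a := by
        simpa using r.isLt
      show _ = DetDiagId.Bmat C d0 (i, r.castSucc) (i', c)
      simp [DetDiagId.Bmat, hrval]
    · rcases qc with ⟨i', c⟩
      have hP : DetDiagId.rowEnc a h (Sum.inr j)
          = (⟨h * a + j, by
              have h1 : (j : ℕ) < h := j.isLt
              have h2 : h * (a+1) = h * a + h := by ring
              omega⟩ : Fin (h*(a+1))) := Fin.ext rfl
      have hQ : DetDiagId.colEnc a h (i', c)
          = (⟨(i' : ℕ) * (a+1) + c, by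
              have h1 : (i' : ℕ) + 1 ≤ h := i'.isLt
              have h2 := c.isLt
              nlinarith⟩ : Fin (h*(a+1))) := Fin.ext rfl
      have hb : B (⟨h * a + j, by
              have h1 : (j : ℕ) < h := j.isLt
              have h2 : h * (a+1) = h * a + h := by ring
              omega⟩ : Fin (h*(a+1)))
          (⟨(i' : ℕ) * (a+1) + c, by
              have h1 : (i' : ℕ) + 1 ≤ h := i'.isLt
              have h2 := c.isLt
              nlinarith⟩ : Fin (h*(a+1))) = D i' j c :=
        hBbot j i' c
      rw [hP, hQ, hb]
      show _ = DetDiagId.Bmat C d0 (j, Fin.last a) (i', c)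
      have hla : ¬ (((Fin.last a : Fin (a+1)) : ℕ) < a) := by simp [Fin.val_last]
      simp [DetDiagId.Bmat, hla, hd0]
  rw [hBsub]
  have hmat : (DetDiagId.Bmat C d0).submatrix
      ((DetDiagId.rowEnc a h).symm.trans (DetDiagId.psi a h)) (DetDiagId.colEnc a h).symm
      = ((DetDiagId.Bmat C d0).submatrix (DetDiagId.colEnc a h).symm
          (DetDiagId.colEnc a h).symm).submatrix (DetDiagId.tau a h) id := by
    ext p q
    rw [Matrix.submatrix_apply, Matrix.submatrix_apply, Matrix.submatrix_apply, id_eq]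
    congr 1
    simp [DetDiagId.tau, Equiv.trans_apply, Equiv.symm_apply_apply]
  rw [hmat, Matrix.det_permute, Matrix.det_submatrix_equiv_self,
    DetDiagId.det_Bmat_eq_det_Mmat, DetDiagId.sign_tau]
  congr 1
  simp
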